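/- Let n ≥ 2, let τₙ denote the permutation 2 3 ⋯ (n−1) n 1 of {1,…,n}, and let i ∈ {1,…,n−1}. Then sⁱ(τₙ) = 2 3 ⋯ (n−i) 1 (n−i+1) (n−i+2) ⋯ (n−1) n; that is, the i-th stack-sorting iterate of τₙ begins with 2,3,…,(n−i), followed by 1, followed by (n−i+1),…,n in increasing order. -/
import Mathlib


open scoped Pointwise

/-- One pass of the stack-sorting algorithm: `ssAux stack input`, where
`stack` holds the current stack contents, top first.  If the next input
entry exceeds the top of the stack, the top is popped to the output;
otherwise the entry is pushed; at the end the stack is popped entirely. -/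
def ssAux : List ℕ → List ℕ → List ℕ
  | stack, [] => stack
  | [], x :: xs => ssAux [x] xs
  | t :: ts, x :: xs =>
    if t < x then t :: ssAux ts (x :: xs) else ssAux (x :: t :: ts) xs
termination_by stack inp => stack.length + 2 * inp.length

/-- The stack-sorting map `s`: one pass of the stack-sorting algorithm. -/
def stackSort (l : List ℕ) : List ℕ := ssAux [] l

lemma ssAux_run (k : ℕ) : ∀ (a : ℕ) (rest : List ℕ),
    ssAux [a] (List.range' (a+1) k ++ rest) = List.range' a k ++ ssAux [a+k] rest := by
  induction k with
  | zero => intro a rest; simp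
  | succ k ih =>
    intro a rest
    rw [List.range'_succ, List.cons_append, ssAux, if_pos (Nat.lt_succ_self a), ssAux,
      ih (a+1) rest, List.range'_succ]
    simp [Nat.add_assoc, Nat.add_comm 1 k]

lemma ssAux_end (b m : ℕ) (hb : 1 ≤ b) :
    ssAux [1, b] (List.range' (b+1) m) = 1 :: List.range' b (m+1) := by
  cases m with
  | zero => simp [ssAux, List.range'_one]
  | succ m =>
    rw [List.range'_succ, ssAux, if_pos (by omega : (1:ℕ) < b + 1)]
    have h := ssAux_run (m+1) b []
    rw [List.append_nil, List.range'_succ] at h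
    rw [h, ssAux]
    simp [List.range'_concat]

lemma stackSort_step (k m : ℕ) (hk : 1 ≤ k) :
    stackSort (List.range' 2 k ++ [1] ++ List.range' (k+2) m) =
      List.range' 2 (k-1) ++ [1] ++ List.range' (k+1) (m+1) := by
  obtain ⟨k, rfl⟩ : ∃ k', k = k' + 1 := ⟨k - 1, by omega⟩
  rw [stackSort, List.range'_succ, List.append_assoc, List.append_assoc, List.cons_append,
    ssAux,
    ssAux_run k 2 ([1] ++ List.range' (k+1+2) m)]
  rw [List.singleton_append, ssAux, if_neg (by omega : ¬ 2 + k < 1),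
    show k+1+2 = (2+k)+1 by omega, ssAux_end (2+k) m (by omega)]
  simp [show k+1-1 = k by omega, show k+1+1 = 2+k by omega]

/-- Let `n ≥ 2`, let `τₙ = 2 3 ⋯ (n-1) n 1`, and let
`1 ≤ i ≤ n-1`.  Then
`sⁱ(τₙ) = 2 3 ⋯ (n-i) 1 (n-i+1) (n-i+2) ⋯ (n-1) n`. -/
theorem stackSort_iterate_tau (n : ℕ) (hn : 2 ≤ n) (i : ℕ) (hi1 : 1 ≤ i)
    (hi2 : i ≤ n - 1) :
    stackSort^[i] (List.range' 2 (n - 1) ++ [1]) =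
      List.range' 2 (n - i - 1) ++ [1] ++ List.range' (n - i + 1) i := by
  induction i, hi1 using Nat.le_induction with
  | base =>
    have h := stackSort_step (n-1) 0 (by omega)
    simp only [List.range'_zero, List.append_nil] at h
    rw [Function.iterate_one, h]
  | succ i hi ih =>
    have hi' : i ≤ n - 1 := by omega
    rw [Function.iterate_succ_apply', ih hi']
    have h := stackSort_step (n-i-1) i (by omega)
    rw [show n-i-1+2 = n-i+1 by omega] at h
    rw [h]
    congr 2 <;> omega
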